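/- For all integers r ≥ 1 and h ≥ 3, the graph obtained from ZT(r,h) by deleting all ring edges joining (i,j) and (i+1,j) for which i + j is even (parity of i taken via its representative in {0,…,2h−1}) has exactly h connected components, and each connected component (with its induced subgraph structure) is isomorphic to the path graph P_{2r+2} on 2r + 2 vertices. -/

import Mathlib

/-- The zig-zag nanotube `ZT(r,h)` with `r` layers of hexagons, each containing `h` hexagons:
vertex set `ZMod (2h) × {0,…,r}`; ring edges join `(i,j)` and `(i+1,j)`, and vertical edges
join `(i,j)` and `(i,j+1)` when the parity of `i` equals the parity of `j`. -/
def ZT (r h : ℕ) : SimpleGraph (ZMod (2 * h) × Fin (r + 1)) :=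
  SimpleGraph.fromRel (fun p q =>
    (p.2 = q.2 ∧ q.1 = p.1 + 1) ∨
    (p.1 = q.1 ∧ (q.2 : ℕ) = (p.2 : ℕ) + 1 ∧ p.1.val % 2 = (p.2 : ℕ) % 2))

/-- The (unordered) predicate selecting the ring edges of `ZT(r,h)` that join `(i,j)` and
`(i+1,j)` with `i + j` even. -/
def ZTringEven (r h : ℕ) (p q : ZMod (2 * h) × Fin (r + 1)) : Prop :=
  p.2 = q.2 ∧ ((q.1 = p.1 + 1 ∧ Even (p.1.val + (p.2 : ℕ))) ∨
               (p.1 = q.1 + 1 ∧ Even (q.1.val + (p.2 : ℕ))))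

/-- The graph obtained from `ZT(r,h)` by deleting all ring edges joining `(i,j)` and
`(i+1,j)` for which `i + j` is even. -/
def ZTdelRingEven (r h : ℕ) : SimpleGraph (ZMod (2 * h) × Fin (r + 1)) where
  Adj p q := (ZT r h).Adj p q ∧ ¬ ZTringEven r h p q
  symm := ⟨fun p q hpq => ⟨hpq.1.symm, by
    intro hc
    apply hpq.2
    obtain ⟨h1, h2⟩ := hc
    refine ⟨h1.symm, ?_⟩
    have hv : (p.2 : ℕ) = (q.2 : ℕ) := by rw [h1]
    rcases h2 with ⟨h2, h3⟩ | ⟨h2, h3⟩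
    · exact Or.inr ⟨h2, by rwa [hv]⟩
    · exact Or.inl ⟨h2, by rwa [hv]⟩⟩⟩
  loopless := ⟨fun p hp => hp.1.ne rfl⟩

namespace ZTaux

open SimpleGraph

variable (r h : ℕ)

def kap (v : ZMod (2 * h) × Fin (r + 1)) : ZMod (2 * h) :=
  if Even (v.1.val + (v.2 : ℕ)) then v.1 - ((v.2 : ℕ) : ZMod (2 * h)) - 1
  else v.1 - ((v.2 : ℕ) : ZMod (2 * h))

def tau (v : ZMod (2 * h) × Fin (r + 1)) : ℕ :=
  2 * (v.2 : ℕ) + (if Even (v.1.val + (v.2 : ℕ)) then 1 else 0)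

def psi (a : Fin h) (t : Fin (2 * r + 2)) : ZMod (2 * h) × Fin (r + 1) :=
  (((2 * a.val + 1 + (t.val + 1) / 2 : ℕ) : ZMod (2 * h)),
   ⟨t.val / 2, by have := t.isLt; omega⟩)

lemma valmod (hh : 3 ≤ h) (n : ℕ) : ((n : ZMod (2 * h))).val % 2 = n % 2 := by
  haveI : NeZero (2 * h) := ⟨by omega⟩
  rw [ZMod.val_natCast]
  exact Nat.mod_mod_of_dvd n ⟨h, rfl⟩

lemma val_add_one_mod (hh : 3 ≤ h) (x : ZMod (2 * h)) :
    (x + 1).val % 2 = (x.val + 1) % 2 := by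
  haveI : NeZero (2 * h) := ⟨by omega⟩
  haveI : Fact (1 < 2 * h) := ⟨by omega⟩
  rw [ZMod.val_add, ZMod.val_one]
  exact Nat.mod_mod_of_dvd _ ⟨h, rfl⟩

lemma tau_lt (v : ZMod (2 * h) × Fin (r + 1)) : tau r h v < 2 * r + 2 := by
  unfold tau
  have := v.2.isLt
  split <;> omega

def RingE (p q : ZMod (2 * h) × Fin (r + 1)) : Prop :=
  p.2 = q.2 ∧ q.1 = p.1 + 1 ∧ ¬ Even (p.1.val + (p.2 : ℕ))

def VertE (p q : ZMod (2 * h) × Fin (r + 1)) : Prop :=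
  p.1 = q.1 ∧ (q.2 : ℕ) = (p.2 : ℕ) + 1 ∧ p.1.val % 2 = (p.2 : ℕ) % 2

lemma self_ne_add_one (hh : 3 ≤ h) (x : ZMod (2 * h)) : x ≠ x + 1 := by
  haveI : NeZero (2 * h) := ⟨by omega⟩
  haveI : Fact (1 < 2 * h) := ⟨by omega⟩
  intro hx
  have h1 : (1 : ZMod (2 * h)) = 0 := left_eq_add.mp hx
  have hv := ZMod.val_one (2 * h)
  rw [h1, ZMod.val_zero] at hv
  exact absurd hv (by omega)

lemma self_ne_add_two (hh : 3 ≤ h) (x : ZMod (2 * h)) : x ≠ x + 1 + 1 := by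
  haveI : NeZero (2 * h) := ⟨by omega⟩
  intro hx
  have h2 : ((2 : ℕ) : ZMod (2 * h)) = 0 := by
    push_cast
    linear_combination - hx
  have hv : ((2 : ℕ) : ZMod (2 * h)).val = 2 := ZMod.val_cast_of_lt (by omega)
  rw [h2, ZMod.val_zero] at hv
  exact absurd hv (by omega)

lemma adj_iff (hh : 3 ≤ h) (p q : ZMod (2 * h) × Fin (r + 1)) :
    (ZTdelRingEven r h).Adj p q ↔
      RingE r h p q ∨ RingE r h q p ∨ VertE r h p q ∨ VertE r h q p := by
  constructor
  · rintro ⟨hZT, hdel⟩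
    rw [ZT, SimpleGraph.fromRel_adj] at hZT
    obtain ⟨hne, hrel⟩ := hZT
    rcases hrel with (⟨h2, h1⟩ | ⟨h1, h2, h3⟩) | (⟨h2, h1⟩ | ⟨h1, h2, h3⟩)
    · -- ring edge p→q
      refine Or.inl ⟨h2, h1, fun hev => ?_⟩
      exact hdel ⟨h2, Or.inl ⟨h1, hev⟩⟩
    · exact Or.inr (Or.inr (Or.inl ⟨h1, h2, h3⟩))
    · -- ring edge q→p
      refine Or.inr (Or.inl ⟨h2, h1, fun hev => ?_⟩)
      apply hdel
      refine ⟨h2.symm, Or.inr ⟨h1, ?_⟩⟩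
      have : (q.2 : ℕ) = (p.2 : ℕ) := by rw [h2]
      rwa [this] at hev
    · exact Or.inr (Or.inr (Or.inr ⟨h1, h2, h3⟩))
  · intro hcase
    rcases hcase with ⟨h2, h1, hev⟩ | ⟨h2, h1, hev⟩ | ⟨h1, h2, h3⟩ | ⟨h1, h2, h3⟩
    · refine ⟨?_, ?_⟩
      · rw [ZT, SimpleGraph.fromRel_adj]
        refine ⟨fun hpq => ?_, Or.inl (Or.inl ⟨h2, h1⟩)⟩
        rw [hpq] at h1
        exact self_ne_add_one h hh q.1 h1
      · rintro ⟨hd2, ⟨_, hev'⟩ | ⟨hd1, _⟩⟩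
        · exact hev hev'
        · rw [h1] at hd1
          exact self_ne_add_two h hh p.1 hd1
    · refine ⟨?_, ?_⟩
      · rw [ZT, SimpleGraph.fromRel_adj]
        refine ⟨fun hpq => ?_, Or.inr (Or.inl ⟨h2, h1⟩)⟩
        rw [hpq] at h1
        exact self_ne_add_one h hh q.1 h1
      · rintro ⟨hd2, ⟨hd1, _⟩ | ⟨_, hev'⟩⟩
        · rw [hd1] at h1
          exact self_ne_add_two h hh p.1 h1
        · have : (p.2 : ℕ) = (q.2 : ℕ) := by rw [hd2]
          rw [this] at hev'
          exact hev hev'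
    · refine ⟨?_, ?_⟩
      · rw [ZT, SimpleGraph.fromRel_adj]
        refine ⟨fun hpq => ?_, Or.inl (Or.inr ⟨h1, h2, h3⟩)⟩
        rw [hpq] at h2
        omega
      · rintro ⟨hd2, -⟩
        rw [hd2] at h2
        omega
    · refine ⟨?_, ?_⟩
      · rw [ZT, SimpleGraph.fromRel_adj]
        refine ⟨fun hpq => ?_, Or.inr (Or.inr ⟨h1, h2, h3⟩)⟩
        rw [hpq] at h2
        omega
      · rintro ⟨hd2, -⟩
        rw [hd2] at h2
        omega

lemma ring_step (hh : 3 ≤ h) {p q : ZMod (2 * h) × Fin (r + 1)} (hE : RingE r h p q) :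
    kap r h p = kap r h q ∧ tau r h q = tau r h p + 1 := by
  obtain ⟨h2, h1, hpar⟩ := hE
  obtain ⟨i, j⟩ := p
  obtain ⟨i', j'⟩ := q
  simp only at h2 h1 hpar
  subst h2
  subst h1
  have hpar' : (i.val + (j : ℕ)) % 2 = 1 := Nat.not_even_iff.mp hpar
  have hmod : (i + 1).val % 2 = (i.val + 1) % 2 := val_add_one_mod h hh i
  have hq_even : Even ((i + 1).val + (j : ℕ)) := Nat.even_iff.mpr (by omega)
  constructor
  · unfold kap
    simp only
    rw [if_neg hpar, if_pos hq_even]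
    ring
  · unfold tau
    simp only
    rw [if_neg hpar, if_pos hq_even]

lemma vert_step (hh : 3 ≤ h) {p q : ZMod (2 * h) × Fin (r + 1)} (hE : VertE r h p q) :
    kap r h p = kap r h q ∧ tau r h q = tau r h p + 1 := by
  obtain ⟨h1, h2, hpar⟩ := hE
  obtain ⟨i, j⟩ := p
  obtain ⟨i', j'⟩ := q
  simp only at h1 h2 hpar
  subst h1
  have hpar' : i.val % 2 = (j : ℕ) % 2 := hpar
  have hE1 : Even (i.val + (j : ℕ)) := Nat.even_iff.mpr (by omega)
  have hE2 : ¬ Even (i.val + (j' : ℕ)) := by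
    rw [Nat.not_even_iff]
    omega
  constructor
  · unfold kap
    simp only
    rw [if_pos hE1, if_neg hE2, h2]
    push_cast
    ring
  · unfold tau
    simp only
    rw [if_pos hE1, if_neg hE2]
    omega

lemma adj_step (hh : 3 ≤ h) {p q : ZMod (2 * h) × Fin (r + 1)}
    (hadj : (ZTdelRingEven r h).Adj p q) :
    kap r h p = kap r h q ∧ (tau r h q = tau r h p + 1 ∨ tau r h p = tau r h q + 1) := by
  rcases (adj_iff r h hh p q).mp hadj with hc | hc | hc | hc
  · exact ⟨(ring_step r h hh hc).1, Or.inl (ring_step r h hh hc).2⟩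
  · exact ⟨(ring_step r h hh hc).1.symm, Or.inr (ring_step r h hh hc).2⟩
  · exact ⟨(vert_step r h hh hc).1, Or.inl (vert_step r h hh hc).2⟩
  · exact ⟨(vert_step r h hh hc).1.symm, Or.inr (vert_step r h hh hc).2⟩

lemma psi_parity (hh : 3 ≤ h) (a : Fin h) (t : Fin (2 * r + 2)) :
    ((psi r h a t).1.val + ((psi r h a t).2 : ℕ)) % 2 = (t.val + 1) % 2 := by
  have h1 : (psi r h a t).1.val % 2 = (2 * a.val + 1 + (t.val + 1) / 2) % 2 :=
    valmod h hh _
  have h2 : ((psi r h a t).2 : ℕ) = t.val / 2 := rfl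
  omega

lemma tau_psi (hh : 3 ≤ h) (a : Fin h) (t : Fin (2 * r + 2)) :
    tau r h (psi r h a t) = t.val := by
  have hb := psi_parity r h hh a t
  have h2 : ((psi r h a t).2 : ℕ) = t.val / 2 := rfl
  unfold tau
  by_cases hE : Even ((psi r h a t).1.val + ((psi r h a t).2 : ℕ))
  · rw [if_pos hE]
    rw [Nat.even_iff] at hE
    omega
  · rw [if_neg hE]
    rw [Nat.not_even_iff] at hE
    omega

lemma kap_psi (hh : 3 ≤ h) (a : Fin h) (t : Fin (2 * r + 2)) :
    kap r h (psi r h a t) = ((2 * a.val + 1 : ℕ) : ZMod (2 * h)) := by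
  have hb := psi_parity r h hh a t
  have h2 : ((psi r h a t).2 : ℕ) = t.val / 2 := rfl
  have hfst : (psi r h a t).1 = ((2 * a.val + 1 + (t.val + 1) / 2 : ℕ) : ZMod (2 * h)) := rfl
  unfold kap
  by_cases hE : Even ((psi r h a t).1.val + ((psi r h a t).2 : ℕ))
  · rw [if_pos hE, hfst, h2]
    rw [Nat.even_iff] at hE
    have ht : (t.val + 1) / 2 = t.val / 2 + 1 := by omega
    rw [ht]
    push_cast
    ring
  · rw [if_neg hE, hfst, h2]
    rw [Nat.not_even_iff] at hE
    have ht : (t.val + 1) / 2 = t.val / 2 := by omega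
    rw [ht]
    push_cast
    ring

lemma psi_adj (hh : 3 ≤ h) (a : Fin h) (t t' : Fin (2 * r + 2))
    (hst : t'.val = t.val + 1) :
    (ZTdelRingEven r h).Adj (psi r h a t) (psi r h a t') := by
  rw [adj_iff r h hh]
  have hfst : (psi r h a t).1 = ((2 * a.val + 1 + (t.val + 1) / 2 : ℕ) : ZMod (2 * h)) := rfl
  have hfst' : (psi r h a t').1 = ((2 * a.val + 1 + (t'.val + 1) / 2 : ℕ) : ZMod (2 * h)) := rfl
  have hsnd : ((psi r h a t).2 : ℕ) = t.val / 2 := rfl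
  have hsnd' : ((psi r h a t').2 : ℕ) = t'.val / 2 := rfl
  have hm : (psi r h a t).1.val % 2 = (2 * a.val + 1 + (t.val + 1) / 2) % 2 := valmod h hh _
  rcases Nat.even_or_odd t.val with he | ho
  · -- t even : ring edge
    rw [Nat.even_iff] at he
    refine Or.inl ⟨?_, ?_, ?_⟩
    · -- p.2 = q.2
      apply Fin.ext
      show t.val / 2 = t'.val / 2
      omega
    · -- q.1 = p.1 + 1
      rw [hfst, hfst']
      have hd : (t'.val + 1) / 2 = (t.val + 1) / 2 + 1 := by omega
      rw [hd]
      push_cast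
      ring
    · -- odd
      rw [Nat.not_even_iff, hsnd]
      omega
  · -- t odd : vertical edge
    rw [Nat.odd_iff] at ho
    refine Or.inr (Or.inr (Or.inl ⟨?_, ?_, ?_⟩))
    · rw [hfst, hfst']
      have hd : (t'.val + 1) / 2 = (t.val + 1) / 2 := by omega
      rw [hd]
    · rw [hsnd, hsnd']
      omega
    · rw [hsnd]
      omega

lemma iota_inj (hh : 3 ≤ h) {a b : Fin h}
    (heq : ((2 * a.val + 1 : ℕ) : ZMod (2 * h)) = ((2 * b.val + 1 : ℕ) : ZMod (2 * h))) :
    a = b := by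
  haveI : NeZero (2 * h) := ⟨by omega⟩
  have ha : ((2 * a.val + 1 : ℕ) : ZMod (2 * h)).val = 2 * a.val + 1 :=
    ZMod.val_cast_of_lt (by have := a.isLt; omega)
  have hb : ((2 * b.val + 1 : ℕ) : ZMod (2 * h)).val = 2 * b.val + 1 :=
    ZMod.val_cast_of_lt (by have := b.isLt; omega)
  rw [heq, hb] at ha
  exact Fin.ext (by omega)

lemma psi_inj (hh : 3 ≤ h) :
    Function.Injective (fun x : Fin h × Fin (2 * r + 2) => psi r h x.1 x.2) := by
  rintro ⟨a, s⟩ ⟨b, t⟩ heq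
  simp only at heq
  have ht : s.val = t.val := by
    rw [← tau_psi r h hh a s, ← tau_psi r h hh b t, heq]
  have hk : ((2 * a.val + 1 : ℕ) : ZMod (2 * h)) = ((2 * b.val + 1 : ℕ) : ZMod (2 * h)) := by
    rw [← kap_psi r h hh a s, ← kap_psi r h hh b t, heq]
  have hab := iota_inj h hh hk
  exact Prod.ext hab (Fin.ext ht)

lemma psi_surj (hh : 3 ≤ h) :
    Function.Surjective (fun x : Fin h × Fin (2 * r + 2) => psi r h x.1 x.2) := by
  haveI : NeZero (2 * h) := ⟨by omega⟩
  have hbij := (Fintype.bijective_iff_injective_and_card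
      (fun x : Fin h × Fin (2 * r + 2) => psi r h x.1 x.2)).2
    ⟨psi_inj r h hh, by simp [ZMod.card]; ring⟩
  exact hbij.2

lemma kap_reach (hh : 3 ≤ h) {p q : ZMod (2 * h) × Fin (r + 1)}
    (hr : (ZTdelRingEven r h).Reachable p q) : kap r h p = kap r h q := by
  obtain ⟨w⟩ := hr
  induction w with
  | nil => rfl
  | cons hadj _ ih => exact ((adj_step r h hh hadj).1).trans ih

lemma reach_zero (hh : 3 ≤ h) (a : Fin h) :
    ∀ n, ∀ hn : n < 2 * r + 2,
      (ZTdelRingEven r h).Reachable (psi r h a ⟨n, hn⟩) (psi r h a ⟨0, by omega⟩) := by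
  intro n
  induction n with
  | zero => intro hn; exact SimpleGraph.Reachable.refl _
  | succ n ih =>
    intro hn
    have hadj := psi_adj r h hh a ⟨n, by omega⟩ ⟨n + 1, hn⟩ rfl
    exact hadj.symm.reachable.trans (ih (by omega))

lemma reach_zero' (hh : 3 ≤ h) (a : Fin h) (t : Fin (2 * r + 2)) :
    (ZTdelRingEven r h).Reachable (psi r h a t) (psi r h a ⟨0, by omega⟩) := by
  obtain ⟨n, hn⟩ := t
  exact reach_zero r h hh a n hn

end ZTaux

open ZTaux in
theorem ZTdelRingEven_components (r h : ℕ) (hr : 1 ≤ r) (hh : 3 ≤ h) :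
    Nat.card (ZTdelRingEven r h).ConnectedComponent = h ∧
    ∀ c : (ZTdelRingEven r h).ConnectedComponent,
      Nonempty ((ZTdelRingEven r h).induce c.supp ≃g SimpleGraph.pathGraph (2 * r + 2)) := by
  classical
  haveI : NeZero (2 * h) := ⟨by omega⟩
  have hFinj : Function.Injective
      (fun a : Fin h => (ZTdelRingEven r h).connectedComponentMk (psi r h a ⟨0, by omega⟩)) := by
    intro a b hab
    simp only at hab
    have hre := SimpleGraph.ConnectedComponent.exact hab
    have hk := kap_reach r h hh hre
    rw [kap_psi r h hh, kap_psi r h hh] at hk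
    exact iota_inj h hh hk
  have hFsurj : Function.Surjective
      (fun a : Fin h => (ZTdelRingEven r h).connectedComponentMk (psi r h a ⟨0, by omega⟩)) := by
    intro c
    obtain ⟨v, rfl⟩ := c.exists_rep
    obtain ⟨⟨a, t⟩, rfl⟩ := psi_surj r h hh v
    exact ⟨a, (SimpleGraph.ConnectedComponent.sound (reach_zero' r h hh a t)).symm⟩
  constructor
  · rw [← Nat.card_congr (Equiv.ofBijective _ ⟨hFinj, hFsurj⟩)]
    simp
  · intro c
    obtain ⟨v, rfl⟩ := c.exists_rep
    obtain ⟨⟨a, t⟩, rfl⟩ := psi_surj r h hh v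
    have hsupp : ∀ w, w ∈ ((ZTdelRingEven r h).connectedComponentMk (psi r h a t)).supp ↔
        kap r h w = ((2 * a.val + 1 : ℕ) : ZMod (2 * h)) := by
      intro w
      rw [SimpleGraph.ConnectedComponent.mem_supp_iff]
      constructor
      · intro hw
        have hk := kap_reach r h hh (SimpleGraph.ConnectedComponent.exact hw)
        rw [kap_psi r h hh] at hk
        exact hk
      · intro hw
        obtain ⟨⟨b, s⟩, rfl⟩ := psi_surj r h hh w
        rw [kap_psi r h hh] at hw
        obtain rfl := iota_inj h hh hw
        exact SimpleGraph.ConnectedComponent.sound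
          ((reach_zero' r h hh b s).trans (reach_zero' r h hh b t).symm)
    have hrep : ∀ w : {w // w ∈ ((ZTdelRingEven r h).connectedComponentMk (psi r h a t)).supp},
        ∃ s : Fin (2 * r + 2), psi r h a s = w.1 := by
      rintro ⟨w, hw⟩
      obtain ⟨⟨b, s⟩, rfl⟩ := psi_surj r h hh w
      have hk := (hsupp _).mp hw
      rw [kap_psi r h hh] at hk
      obtain rfl := iota_inj h hh hk
      exact ⟨s, rfl⟩
    refine ⟨⟨⟨fun w => ⟨tau r h w.1, tau_lt r h w.1⟩,
        fun s => ⟨psi r h a s, (hsupp _).mpr (kap_psi r h hh a s)⟩, ?_, ?_⟩, ?_⟩⟩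
    · -- left inverse
      intro w
      obtain ⟨s, hs⟩ := hrep w
      apply Subtype.ext
      show psi r h a ⟨tau r h w.1, tau_lt r h w.1⟩ = w.1
      rw [← hs]
      exact congrArg (psi r h a) (Fin.ext (tau_psi r h hh a s))
    · -- right inverse
      intro s
      exact Fin.ext (tau_psi r h hh a s)
    · -- map_rel_iff
      intro x y
      obtain ⟨s, hs⟩ := hrep x
      obtain ⟨s', hs'⟩ := hrep y
      have hx : tau r h x.1 = s.val := by rw [← hs]; exact tau_psi r h hh a s
      have hy : tau r h y.1 = s'.val := by rw [← hs']; exact tau_psi r h hh a s'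
      rw [SimpleGraph.pathGraph_adj]
      show tau r h x.1 + 1 = tau r h y.1 ∨ tau r h y.1 + 1 = tau r h x.1 ↔
        (ZTdelRingEven r h).Adj x.1 y.1
      rw [hx, hy, ← hs, ← hs']
      constructor
      · rintro (h1 | h1)
        · exact psi_adj r h hh a s s' h1.symm
        · exact (psi_adj r h hh a s' s h1.symm).symm
      · intro hadj
        have htau := (adj_step r h hh hadj).2
        rw [tau_psi r h hh, tau_psi r h hh] at htau
        omega
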